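/- Let n = dim V, let r₁ = dim ker(P†P − id) be the multiplicity of eigenvalue 1 and r₀ = dim ker(P†P) the multiplicity of eigenvalue 0 of P†P. Then dim ker(Q†Q) = n − r₀ and dim ker(Q†Q − id) = 2r₀ + r₁ − n; i.e., the spectrum of Q†Q contains eigenvalue 0 with multiplicity n − r₀ and eigenvalue 1 with multiplicity 2r₀ + r₁ − n. -/

import Mathlib

open LinearMap Module

section Aux

variable {V : Type*} [NormedAddCommGroup V] [InnerProductSpace ℝ V]
    [FiniteDimensional ℝ V]

/-- `ker (A† ∘ A) = ker A`. -/
lemma aux_ker_adjoint_comp_self (A : V →ₗ[ℝ] V) :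
    LinearMap.ker (LinearMap.adjoint A ∘ₗ A) = LinearMap.ker A := by
  ext x
  simp only [LinearMap.mem_ker, LinearMap.comp_apply]
  constructor
  · intro h
    have h0 : (inner ℝ (A x) (A x) : ℝ) = 0 := by
      rw [← LinearMap.adjoint_inner_right A, h, inner_zero_right]
    exact inner_self_eq_zero.mp h0
  · intro h; rw [h, map_zero]

/-- `ker A† = (range A)ᗮ`. -/
lemma aux_ker_adjoint (A : V →ₗ[ℝ] V) :
    LinearMap.ker (LinearMap.adjoint A) = (LinearMap.range A)ᗮ := by
  ext x
  simp only [LinearMap.mem_ker, Submodule.mem_orthogonal]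
  constructor
  · rintro h u ⟨y, rfl⟩
    rw [← LinearMap.adjoint_inner_right A y x, h, inner_zero_right]
  · intro h
    have h0 : (inner ℝ (LinearMap.adjoint A x) (LinearMap.adjoint A x) : ℝ) = 0 := by
      rw [LinearMap.adjoint_inner_left A]
      rw [real_inner_comm]
      exact h _ ⟨_, rfl⟩
    exact inner_self_eq_zero.mp h0

/-- For a projection `P`, `ker (P†P − id) = range P ⊓ range P†`. -/
lemma aux_ker_fix (P : V →ₗ[ℝ] V) (hP : P ∘ₗ P = P) :
    LinearMap.ker (LinearMap.adjoint P ∘ₗ P - LinearMap.id) =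
      LinearMap.range P ⊓ LinearMap.range (LinearMap.adjoint P) := by
  have hP' : LinearMap.adjoint P ∘ₗ LinearMap.adjoint P = LinearMap.adjoint P := by
    rw [← LinearMap.adjoint_comp, hP]
  ext x
  simp only [LinearMap.mem_ker, LinearMap.sub_apply, LinearMap.comp_apply, LinearMap.id_apply,
    Submodule.mem_inf, LinearMap.mem_range, sub_eq_zero]
  constructor
  · intro h
    -- first show `P x = x`
    have hPPx : P (P x) = P x := congrFun (congrArg DFunLike.coe hP) x
    have hxx : (inner ℝ x x : ℝ) = inner ℝ (P x) (P x) := by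
      nth_rewrite 2 [← h]
      rw [LinearMap.adjoint_inner_right]
    have hPxx : (inner ℝ (P x) x : ℝ) = inner ℝ (P x) (P x) := by
      nth_rewrite 2 [← h]
      rw [LinearMap.adjoint_inner_right, hPPx]
    have hxPx : (inner ℝ x (P x) : ℝ) = inner ℝ (P x) (P x) := by
      rw [real_inner_comm]; exact hPxx
    have hz : (inner ℝ (P x - x) (P x - x) : ℝ) = 0 := by
      rw [inner_sub_left, inner_sub_right, inner_sub_right, hxx, hPxx, hxPx]
      ring
    have hPx : P x = x := sub_eq_zero.mp (inner_self_eq_zero.mp hz)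
    refine ⟨⟨x, hPx⟩, ⟨x, ?_⟩⟩
    conv_lhs => rw [← hPx]
    exact h
  · rintro ⟨⟨y, hy⟩, ⟨z, hz⟩⟩
    have hPx : P x = x := by
      rw [← hy, ← LinearMap.comp_apply, hP]
    have hAx : LinearMap.adjoint P x = x := by
      rw [← hz, ← LinearMap.comp_apply, hP']
    rw [hPx, hAx]

/-- For a projection `P`, `ker (id − P) = range P`. -/
lemma aux_ker_compl (P : V →ₗ[ℝ] V) (hP : P ∘ₗ P = P) :
    LinearMap.ker (LinearMap.id - P) = LinearMap.range P := by
  ext x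
  simp only [LinearMap.mem_ker, LinearMap.sub_apply, LinearMap.id_apply, sub_eq_zero,
    LinearMap.mem_range]
  constructor
  · intro h; exact ⟨x, h.symm⟩
  · rintro ⟨y, rfl⟩
    exact (congrFun (congrArg DFunLike.coe hP) y).symm ▸ rfl

/-- For a projection `P`, `range (id − P) = ker P`. -/
lemma aux_range_compl (P : V →ₗ[ℝ] V) (hP : P ∘ₗ P = P) :
    LinearMap.range (LinearMap.id - P) = LinearMap.ker P := by
  ext x
  simp only [LinearMap.mem_range, LinearMap.sub_apply, LinearMap.id_apply, LinearMap.mem_ker]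
  constructor
  · rintro ⟨y, rfl⟩
    have := congrFun (congrArg DFunLike.coe hP) y
    simp only [LinearMap.comp_apply] at this
    rw [map_sub, this, sub_self]
  · intro h
    exact ⟨x, by rw [h, sub_zero]⟩

/-- `range A† = (ker A)ᗮ`. -/
lemma aux_range_adjoint (A : V →ₗ[ℝ] V) :
    LinearMap.range (LinearMap.adjoint A) = (LinearMap.ker A)ᗮ := by
  have h := aux_ker_adjoint (LinearMap.adjoint A)
  rw [LinearMap.adjoint_adjoint] at h
  rw [h, Submodule.orthogonal_orthogonal]

end Aux

/-- If `r₁`, `r₀` are the multiplicities of the eigenvalues `1` and `0` of `P†P` and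
`n = dim V`, then `Q†Q` has eigenvalue `0` with multiplicity `n − r₀` and eigenvalue `1`
with multiplicity `2r₀ + r₁ − n`, where `Q = id − P`. -/
theorem statement10 {V : Type*} [NormedAddCommGroup V] [InnerProductSpace ℝ V]
    [FiniteDimensional ℝ V] (P Q : V →ₗ[ℝ] V) (hP : P ∘ₗ P = P)
    (hQ : Q = LinearMap.id - P)
    (n r₀ r₁ : ℕ) (hn : n = Module.finrank ℝ V)
    (hr₁ : r₁ = Module.finrank ℝ (LinearMap.ker (LinearMap.adjoint P ∘ₗ P - LinearMap.id)))
    (hr₀ : r₀ = Module.finrank ℝ (LinearMap.ker (LinearMap.adjoint P ∘ₗ P))) :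
    (Module.finrank ℝ (LinearMap.ker (LinearMap.adjoint Q ∘ₗ Q)) : ℤ) = n - r₀ ∧
    (Module.finrank ℝ (LinearMap.ker (LinearMap.adjoint Q ∘ₗ Q - LinearMap.id)) : ℤ) =
      2 * r₀ + r₁ - n := by
  subst hQ hn hr₀ hr₁
  set K := LinearMap.ker P with hK
  set R := LinearMap.range P with hR
  -- `Q` is a projection
  have hQQ : (LinearMap.id - P) ∘ₗ (LinearMap.id - P) = LinearMap.id - P := by
    ext x
    have hPPx : P (P x) = P x := congrFun (congrArg DFunLike.coe hP) x
    simp only [LinearMap.comp_apply, LinearMap.sub_apply, LinearMap.id_apply, map_sub, hPPx]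
    abel
  have hadjQ : LinearMap.adjoint (LinearMap.id - P) = LinearMap.id - LinearMap.adjoint P := by
    have hid : LinearMap.adjoint (LinearMap.id : V →ₗ[ℝ] V) = LinearMap.id :=
      ((LinearMap.eq_adjoint_iff _ _).mpr fun _ _ => rfl).symm
    rw [map_sub, hid]
  have hP' : LinearMap.adjoint P ∘ₗ LinearMap.adjoint P = LinearMap.adjoint P := by
    rw [← LinearMap.adjoint_comp, hP]
  -- identify the kernels
  have e0 : LinearMap.ker (LinearMap.adjoint (LinearMap.id - P) ∘ₗ (LinearMap.id - P)) = R := by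
    rw [aux_ker_adjoint_comp_self, aux_ker_compl P hP]
  have e1 : LinearMap.ker
      (LinearMap.adjoint (LinearMap.id - P) ∘ₗ (LinearMap.id - P) - LinearMap.id) = K ⊓ Rᗮ := by
    rw [aux_ker_fix _ hQQ, hadjQ, aux_range_compl P hP,
      aux_range_compl (LinearMap.adjoint P) hP', aux_ker_adjoint]
  have e2 : LinearMap.ker (LinearMap.adjoint P ∘ₗ P) = K := aux_ker_adjoint_comp_self P
  have e3 : LinearMap.ker (LinearMap.adjoint P ∘ₗ P - LinearMap.id) = Kᗮ ⊓ R := by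
    rw [aux_ker_fix P hP, aux_range_adjoint, inf_comm]
  rw [e0, e1, e2, e3]
  -- dimension bookkeeping
  have eX : K ⊓ Rᗮ = (Kᗮ ⊔ R)ᗮ := by
    rw [← Submodule.inf_orthogonal, Submodule.orthogonal_orthogonal]
  have ea : Module.finrank ℝ ↥(Kᗮ ⊔ R) + Module.finrank ℝ ↥(K ⊓ Rᗮ) = Module.finrank ℝ V := by
    rw [eX]; exact Submodule.finrank_add_finrank_orthogonal _
  have eb : Module.finrank ℝ ↥(Kᗮ ⊔ R) + Module.finrank ℝ ↥(Kᗮ ⊓ R)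
      = Module.finrank ℝ ↥(Kᗮ) + Module.finrank ℝ ↥R :=
    Submodule.finrank_sup_add_finrank_inf_eq _ _
  have ec : Module.finrank ℝ ↥K + Module.finrank ℝ ↥(Kᗮ) = Module.finrank ℝ V :=
    Submodule.finrank_add_finrank_orthogonal _
  have ed : Module.finrank ℝ ↥R + Module.finrank ℝ ↥K = Module.finrank ℝ V :=
    LinearMap.finrank_range_add_finrank_ker P
  constructor <;> push_cast <;> omega
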